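/- Let S be a 4×4 matrix and define V_g(S) := ∑_{n=0}^{3} β_n ∑_{k=0}^{n} (−1)^{n+k} e_k(S) S^{n−k} and V_f(S) := ∑_{n=0}^{3} β_{4−n} ∑_{k=0}^{n} (−1)^{n+k} e_k(S⁻¹) S^{−n+k}, with e_k the elementary symmetric polynomials of the eigenvalues. Then V_g(S) + det(S)·V_f(S) = (∑_{n=0}^{4} β_n e_n(S))·I. -/

import Mathlib

/-!
The algebraic identity `V_g(S) + det S · V_f(S) = V(S) · I` of Hassan–Rosen
bimetric theory, for an invertible `4 × 4` real matrix `S`, where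
`V_g(S) = ∑_{n=0}^{3} β_n ∑_{k=0}^{n} (-1)^{n+k} e_k(S) S^{n-k}`,
`V_f(S) = ∑_{n=0}^{3} β_{4-n} ∑_{k=0}^{n} (-1)^{n+k} e_k(S⁻¹) S^{-n+k}`,
`V(S) = ∑_{n=0}^{4} β_n e_n(S)`, and `e_k` are the elementary symmetric
polynomials of the eigenvalues, defined via `det (1 + t S) = ∑ k, e_k(S) t^k`.
-/

/-- `esym n S k` is the `k`-th elementary symmetric polynomial of the eigenvalues of `S`. -/
noncomputable def esym (n : ℕ) (S : Matrix (Fin n) (Fin n) ℝ) (k : ℕ) : ℝ :=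
  ((1 + (Polynomial.X : Polynomial ℝ) • S.map Polynomial.C).det).coeff k

/-- The tensor potential `V_g(S)`. -/
noncomputable def Vg (β : ℕ → ℝ) (S : Matrix (Fin 4) (Fin 4) ℝ) :
    Matrix (Fin 4) (Fin 4) ℝ :=
  ∑ n ∈ Finset.range 4, β n •
    ∑ k ∈ Finset.range (n + 1), ((-1 : ℝ) ^ (n + k) * esym 4 S k) • S ^ (n - k)

/-- The tensor potential `V_f(S)` (with integer powers `S^(k-n)`). -/
noncomputable def Vf (β : ℕ → ℝ) (S : Matrix (Fin 4) (Fin 4) ℝ) :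
    Matrix (Fin 4) (Fin 4) ℝ :=
  ∑ n ∈ Finset.range 4, β (4 - n) •
    ∑ k ∈ Finset.range (n + 1),
      ((-1 : ℝ) ^ (n + k) * esym 4 S⁻¹ k) • S ^ ((k : ℤ) - (n : ℤ))

open Polynomial Matrix

section aux

lemma esym_eq (S : Matrix (Fin 4) (Fin 4) ℝ) (k : ℕ) (hk : k ≤ 4) :
    esym 4 S k = (Matrix.charpoly (-S)).coeff (4 - k) := by
  have hmap : (-S).map (C : ℝ →+* ℝ[X]) = -(S.map C) := by
    ext i j; simp
  have h1 : esym 4 S k = (Matrix.charpolyRev (-S)).coeff k := by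
    unfold esym Matrix.charpolyRev
    rw [hmap, smul_neg, sub_neg_eq_add]
  have hdeg : (Matrix.charpoly (-S)).natDegree = 4 := by
    simp [Matrix.charpoly_natDegree_eq_dim]
  rw [h1, ← Matrix.reverse_charpoly, Polynomial.coeff_reverse,
    Polynomial.revAt_le (by rw [hdeg]; exact hk), hdeg]

lemma esym_zero (S : Matrix (Fin 4) (Fin 4) ℝ) : esym 4 S 0 = 1 := by
  rw [esym_eq S 0 (by norm_num)]
  have h := Matrix.charpoly_monic (-S)
  have hdeg : (Matrix.charpoly (-S)).natDegree = 4 := by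
    simp [Matrix.charpoly_natDegree_eq_dim]
  simpa [hdeg] using h.coeff_natDegree

lemma esym_four (S : Matrix (Fin 4) (Fin 4) ℝ) : esym 4 S 4 = S.det := by
  rw [esym_eq S 4 (by norm_num)]
  have h := Matrix.det_eq_sign_charpoly_coeff (-S)
  simp [Matrix.det_neg] at h
  simpa using h.symm

lemma esym_inv (S : Matrix (Fin 4) (Fin 4) ℝ) (hS : IsUnit S.det) (k : ℕ) (hk : k ≤ 4) :
    S.det * esym 4 S⁻¹ k = esym 4 S (4 - k) := by
  have hmul : (1 + (X : ℝ[X]) • (S⁻¹).map C) * S.map C = Matrix.charmatrix (-S) := by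
    have h1 : ((S⁻¹).map (C : ℝ →+* ℝ[X])) * S.map C = 1 := by
      rw [← Matrix.map_mul, Matrix.nonsing_inv_mul S hS, Matrix.map_one]
      · exact map_zero _
      · exact map_one _
    rw [Matrix.charmatrix]
    ext i j
    simp [Matrix.add_mul, Matrix.smul_mul, h1, Matrix.scalar_apply, Matrix.one_apply,
      Matrix.diagonal, Matrix.map_apply, add_comm, sub_eq_add_neg]
  have hdet : (1 + (X : ℝ[X]) • (S⁻¹).map C).det * C S.det = Matrix.charpoly (-S) := by
    rw [Matrix.charpoly, ← hmul, Matrix.det_mul]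
    congr 1
    exact RingHom.map_det (C : ℝ →+* ℝ[X]) S
  have := congrArg (fun p => Polynomial.coeff p k) hdet
  simp only [Polynomial.coeff_mul_C] at this
  rw [esym_eq S (4 - k) (by omega), Nat.sub_sub_self hk]
  rw [mul_comm]
  exact this

lemma cayley (S : Matrix (Fin 4) (Fin 4) ℝ) :
    S ^ 4 = esym 4 S 1 • S ^ 3 - esym 4 S 2 • S ^ 2 + esym 4 S 3 • S - esym 4 S 4 • 1 := by
  have h := Matrix.aeval_self_charpoly (-S)
  have hdeg : (Matrix.charpoly (-S)).natDegree = 4 := by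
    simp [Matrix.charpoly_natDegree_eq_dim]
  rw [Polynomial.aeval_eq_sum_range, hdeg] at h
  simp only [Finset.sum_range_succ, Finset.sum_range_zero, zero_add] at h
  have c : ∀ k : ℕ, k ≤ 4 → (Matrix.charpoly (-S)).coeff k = esym 4 S (4 - k) := by
    intro k hk
    rw [esym_eq S (4 - k) (by omega), Nat.sub_sub_self hk]
  have h0 := c 0 (by norm_num); have h1 := c 1 (by norm_num)
  have h2 := c 2 (by norm_num); have h3 := c 3 (by norm_num)
  have h4 := c 4 (by norm_num)
  norm_num [h0, h1, h2, h3, h4, esym_zero] at h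
  have p3 : (-S) ^ 3 = -(S ^ 3) := by noncomm_ring
  have p4 : (-S) ^ 4 = S ^ 4 := by noncomm_ring
  rw [p3] at h
  linear_combination (norm := module) h

end aux

theorem Vg_add_det_smul_Vf (β : ℕ → ℝ) (S : Matrix (Fin 4) (Fin 4) ℝ)
    (hS : IsUnit S.det) :
    Vg β S + S.det • Vf β S =
      (∑ n ∈ Finset.range 5, β n * esym 4 S n) • (1 : Matrix (Fin 4) (Fin 4) ℝ) := by
  have hdetne : S.det ≠ 0 := by
    rcases hS with ⟨u, hu⟩
    exact hu ▸ u.ne_zero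
  -- esym of the inverse in terms of esym of S
  have jgen : ∀ k : ℕ, k ≤ 4 → esym 4 S⁻¹ k = esym 4 S (4 - k) / S.det := by
    intro k hk
    rw [eq_div_iff hdetne, mul_comm]
    exact esym_inv S hS k hk
  have j1 : esym 4 S⁻¹ 1 = esym 4 S 3 / S.det := by
    have := jgen 1 (by norm_num); norm_num at this; exact this
  have j2 : esym 4 S⁻¹ 2 = esym 4 S 2 / S.det := by
    have := jgen 2 (by norm_num); norm_num at this; exact this
  have j3 : esym 4 S⁻¹ 3 = esym 4 S 1 / S.det := by
    have := jgen 3 (by norm_num); norm_num at this; exact this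
  have hS4 := cayley S
  -- auxiliary power-shift identities
  have h41 : S ^ 5 = esym 4 S 1 • S ^ 4 - esym 4 S 2 • S ^ 3 + esym 4 S 3 • S ^ 2
      - esym 4 S 4 • S := by
    calc S ^ 5 = S ^ 4 * S := by noncomm_ring
    _ = (esym 4 S 1 • S ^ 3 - esym 4 S 2 • S ^ 2 + esym 4 S 3 • S - esym 4 S 4 • 1) * S := by
        rw [hS4]
    _ = esym 4 S 1 • (S ^ 3 * S) - esym 4 S 2 • (S ^ 2 * S) + esym 4 S 3 • (S * S)
        - esym 4 S 4 • (1 * S) := by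
        simp [sub_mul, add_mul, smul_mul_assoc]
    _ = _ := by
        rw [show S ^ 3 * S = S ^ 4 by noncomm_ring, show S ^ 2 * S = S ^ 3 by noncomm_ring,
          show S * S = S ^ 2 by noncomm_ring, one_mul]
  have h42 : S ^ 6 = esym 4 S 1 • S ^ 5 - esym 4 S 2 • S ^ 4 + esym 4 S 3 • S ^ 3
      - esym 4 S 4 • S ^ 2 := by
    calc S ^ 6 = S ^ 5 * S := by noncomm_ring
    _ = (esym 4 S 1 • S ^ 4 - esym 4 S 2 • S ^ 3 + esym 4 S 3 • S ^ 2 - esym 4 S 4 • S) * S := by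
        rw [h41]
    _ = esym 4 S 1 • (S ^ 4 * S) - esym 4 S 2 • (S ^ 3 * S) + esym 4 S 3 • (S ^ 2 * S)
        - esym 4 S 4 • (S * S) := by
        simp [sub_mul, add_mul, smul_mul_assoc]
    _ = _ := by
        rw [show S ^ 4 * S = S ^ 5 by noncomm_ring, show S ^ 3 * S = S ^ 4 by noncomm_ring,
          show S ^ 2 * S = S ^ 3 by noncomm_ring, show S * S = S ^ 2 by noncomm_ring]
  -- cancellation identities for inverse powers times S^3
  have hdet2 : IsUnit (S ^ 2).det := by rw [Matrix.det_pow]; exact hS.pow 2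
  have hdet3 : IsUnit (S ^ 3).det := by rw [Matrix.det_pow]; exact hS.pow 3
  have zz1 : S⁻¹ * S ^ 3 = S ^ 2 := by
    rw [show S ^ 3 = S * S ^ 2 by noncomm_ring, ← mul_assoc, Matrix.nonsing_inv_mul S hS, one_mul]
  have zz2 : S ^ (-2 : ℤ) * S ^ 3 = S := by
    rw [show (-2 : ℤ) = -((2 : ℕ) : ℤ) by norm_num, Matrix.zpow_neg_natCast,
      show S ^ 3 = S ^ 2 * S by noncomm_ring, ← mul_assoc, Matrix.nonsing_inv_mul _ hdet2, one_mul]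
  have zz3 : S ^ (-3 : ℤ) * S ^ 3 = 1 := by
    rw [show (-3 : ℤ) = -((3 : ℕ) : ℤ) by norm_num, Matrix.zpow_neg_natCast,
      Matrix.nonsing_inv_mul _ hdet3]
  -- the identity multiplied on the right by S^3
  have key : (Vg β S + S.det • Vf β S) * S ^ 3 =
      ((∑ n ∈ Finset.range 5, β n * esym 4 S n) • (1 : Matrix (Fin 4) (Fin 4) ℝ)) * S ^ 3 := by
    simp only [Vg, Vf, Finset.sum_range_succ, Finset.sum_range_zero, zero_add]
    norm_num
    simp only [add_mul, neg_mul, smul_mul_assoc, one_mul, zz1, zz2, zz3,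
      show S * S ^ 3 = S ^ 4 by noncomm_ring, show S ^ 2 * S ^ 3 = S ^ 5 by noncomm_ring,
      show S ^ 3 * S ^ 3 = S ^ 6 by noncomm_ring]
    rw [esym_zero S, esym_zero S⁻¹, j1, j2, j3, esym_four S]
    simp only [h42, h41, hS4]
    match_scalars <;>
      · try simp only [esym_four]
        try field_simp
        try ring
  calc Vg β S + S.det • Vf β S
      = (Vg β S + S.det • Vf β S) * (S ^ 3 * (S ^ 3)⁻¹) := by
        rw [Matrix.mul_nonsing_inv _ hdet3, mul_one]
    _ = (((∑ n ∈ Finset.range 5, β n * esym 4 S n) • (1 : Matrix (Fin 4) (Fin 4) ℝ)) * S ^ 3)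
        * (S ^ 3)⁻¹ := by rw [← mul_assoc, key]
    _ = _ := by rw [mul_assoc, Matrix.mul_nonsing_inv _ hdet3, mul_one]
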